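/- Let h>0, a∈ℝ, ν∈(0,1], n∈ℕ with n≥1, let P∈ℝ^{n×n} be a symmetric positive definite matrix, and let y:(hℕ)_a→ℝⁿ. Then (1/2)·(_aΔ_{h,*}^ν (yᵀPy))(t) ≤ y(t+νh)ᵀ·P·(_aΔ_{h,*}^ν y)(t) for all t∈(hℕ)_{a+(1−ν)h}. -/

import Mathlib

open Finset Filter Matrix

/-- The `h`-factorial function `t_h^(ν) = h^ν Γ(t/h+1)/Γ(t/h+1-ν)`. -/
noncomputable def hfact (h t ν : ℝ) : ℝ :=
  h ^ ν * Real.Gamma (t / h + 1) / Real.Gamma (t / h + 1 - ν)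

/-- The forward `h`-difference operator. -/
noncomputable def fdiff (h : ℝ) (y : ℝ → ℝ) (t : ℝ) : ℝ := (y (t + h) - y t) / h

/-- The Caputo-like `h`-difference of order `ν ∈ (0,1]` of `y : (hℕ)_a → ℝ`,
evaluated at the grid point `t = a + (1-ν)h + k·h` of `(hℕ)_{a+(1-ν)h}`. -/
noncomputable def caputoD (h a ν : ℝ) (y : ℝ → ℝ) (k : ℕ) : ℝ :=
  if ν = 1 then fdiff h y (a + (k : ℝ) * h)
  else (h / Real.Gamma (1 - ν)) *
    ∑ j ∈ Finset.range (k + 1),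
      hfact h (a + (1 - ν) * h + (k : ℝ) * h - (a + (j : ℝ) * h + h)) (-ν) *
        fdiff h y (a + (j : ℝ) * h)

lemma abel_id (c V : ℕ → ℝ) : ∀ k : ℕ,
    ∑ j ∈ Finset.range (k+1), c j * (V j - V (j+1)) + c k * V (k+1)
      = c 0 * V 0 + ∑ j ∈ Finset.range k, (c (j+1) - c j) * V (j+1) := by
  intro k
  induction k with
  | zero => simp; ring
  | succ k ih =>
    rw [Finset.sum_range_succ, Finset.sum_range_succ (f := fun j => (c (j+1) - c j) * V (j+1))]
    have h1 : ∑ j ∈ Finset.range (k+1), c j * (V j - V (j+1))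
        = c 0 * V 0 + ∑ j ∈ Finset.range k, (c (j+1) - c j) * V (j+1) - c k * V (k+1) := by
      linarith
    rw [h1]; ring

lemma hfact_eq (h ν : ℝ) (hh : 0 < h) (m : ℝ) :
    hfact h ((m - ν) * h) (-ν) = h ^ (-ν) * Real.Gamma (m - ν + 1) / Real.Gamma (m + 1) := by
  unfold hfact
  rw [mul_div_cancel_right₀ _ hh.ne']
  ring_nf

lemma hfact_pos (h ν : ℝ) (hh : 0 < h) (hν0 : 0 < ν) (hν1 : ν < 1) (m : ℝ) (hm : 0 ≤ m) :
    0 < hfact h ((m - ν) * h) (-ν) := by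
  rw [hfact_eq h ν hh m]
  have h1 : 0 < Real.Gamma (m - ν + 1) := Real.Gamma_pos_of_pos (by linarith)
  have h2 : 0 < Real.Gamma (m + 1) := Real.Gamma_pos_of_pos (by linarith)
  have h3 : 0 < h ^ (-ν) := Real.rpow_pos_of_pos hh _
  positivity

lemma hfact_mono (h ν : ℝ) (hh : 0 < h) (hν0 : 0 < ν) (hν1 : ν < 1) (m : ℝ) (hm : 0 ≤ m) :
    hfact h ((m + 1 - ν) * h) (-ν) ≤ hfact h ((m - ν) * h) (-ν) := by
  have e1 : (m + 1 - ν) * h = ((m+1) - ν) * h := by ring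
  rw [e1, hfact_eq h ν hh (m+1), hfact_eq h ν hh m]
  have g1 : 0 < Real.Gamma (m - ν + 1) := Real.Gamma_pos_of_pos (by linarith)
  have g2 : 0 < Real.Gamma (m + 1) := Real.Gamma_pos_of_pos (by linarith)
  have h3 : 0 < h ^ (-ν) := Real.rpow_pos_of_pos hh _
  have e2 : Real.Gamma (m + 1 - ν + 1) = (m + 1 - ν) * Real.Gamma (m + 1 - ν) := by
    rw [Real.Gamma_add_one (by intro hc; nlinarith)]
  have e3 : Real.Gamma (m + 1 + 1) = (m + 1) * Real.Gamma (m + 1) := by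
    rw [Real.Gamma_add_one (by positivity)]
  have e4 : m + 1 - ν = m - ν + 1 := by ring
  rw [e2, e3, e4]
  rw [div_le_div_iff₀ (by positivity) (by positivity)]
  nlinarith [mul_nonneg (mul_nonneg (mul_nonneg h3.le g1.le) g2.le) hν0.le]

lemma psd_nn {n : ℕ} (P : Matrix (Fin n) (Fin n) ℝ) (hP : P.PosDef) (x : Fin n → ℝ) :
    0 ≤ x ⬝ᵥ P *ᵥ x := by simpa using hP.posSemidef.dotProduct_mulVec_nonneg x

lemma bsymm {n : ℕ} (P : Matrix (Fin n) (Fin n) ℝ) (hPsym : P.IsSymm) (x z : Fin n → ℝ) :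
    x ⬝ᵥ P *ᵥ z = z ⬝ᵥ P *ᵥ x := by
  rw [dotProduct_mulVec, ← mulVec_transpose, hPsym.eq, dotProduct_comm]

lemma quad_id {n : ℕ} (P : Matrix (Fin n) (Fin n) ℝ) (hPsym : P.IsSymm) (u p q : Fin n → ℝ) :
    u ⬝ᵥ P *ᵥ q - u ⬝ᵥ P *ᵥ p - (1/2) * (q ⬝ᵥ P *ᵥ q - p ⬝ᵥ P *ᵥ p)
      = (1/2) * ((u - p) ⬝ᵥ P *ᵥ (u - p) - (u - q) ⬝ᵥ P *ᵥ (u - q)) := by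
  have h1 := bsymm P hPsym u p
  have h2 := bsymm P hPsym u q
  simp only [mulVec_sub, dotProduct_sub, sub_dotProduct]
  linarith

lemma dot_sum {n : ℕ} (P : Matrix (Fin n) (Fin n) ℝ) (u : Fin n → ℝ) (s : Finset ℕ) (f : ℕ → ℝ)
    (v : ℕ → Fin n → ℝ) :
    u ⬝ᵥ P *ᵥ (fun i => ∑ j ∈ s, f j * v j i) = ∑ j ∈ s, f j * (u ⬝ᵥ P *ᵥ v j) := by
  classical
  induction s using Finset.induction with
  | empty => simp [Matrix.mulVec, dotProduct]
  | insert b s' hj ih =>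
    have e : (fun i => ∑ j ∈ insert b s', f j * v j i)
        = (f b • v b) + (fun i => ∑ j ∈ s', f j * v j i) := by
      funext i; simp [Finset.sum_insert hj]
    rw [e, mulVec_add, dotProduct_add, ih, mulVec_smul, dotProduct_smul, smul_eq_mul,
      Finset.sum_insert hj]

theorem stmt1 {n : ℕ} (hn : 1 ≤ n) (h a ν : ℝ) (hh : 0 < h) (hν0 : 0 < ν) (hν1 : ν ≤ 1)
    (P : Matrix (Fin n) (Fin n) ℝ) (hPsym : P.IsSymm) (hP : P.PosDef)
    (y : ℝ → Fin n → ℝ) :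
    ∀ k : ℕ,
      (1 / 2) * caputoD h a ν (fun t => y t ⬝ᵥ P.mulVec (y t)) k
        ≤ y (a + ((k : ℝ) + 1) * h) ⬝ᵥ
            P.mulVec (fun i => caputoD h a ν (fun t => y t i) k) := by
  intro k
  by_cases hν : ν = 1
  · subst hν
    simp only [caputoD, if_pos rfl, fdiff, if_true]
    have ht : a + ((k : ℝ) + 1) * h = a + (k : ℝ) * h + h := by ring
    rw [ht]
    set p := y (a + (k : ℝ) * h) with hp
    set q := y (a + (k : ℝ) * h + h) with hq
    have e : (fun i => (q i - p i) / h) = h⁻¹ • (q - p) := by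
      funext i; simp [Pi.smul_apply, Pi.sub_apply]; ring
    rw [e, mulVec_smul, dotProduct_smul, smul_eq_mul]
    have hq1 := quad_id P hPsym q p q
    have hnn : 0 ≤ (q - p) ⬝ᵥ P *ᵥ (q - p) := psd_nn P hP _
    have hz : (q - q) ⬝ᵥ P *ᵥ (q - q) = 0 := by simp
    have key : (1/2) * (q ⬝ᵥ P *ᵥ q - p ⬝ᵥ P *ᵥ p) ≤ q ⬝ᵥ P *ᵥ (q - p) := by
      rw [mulVec_sub, dotProduct_sub]
      linarith
    rw [inv_mul_eq_div, mul_div_assoc']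
    gcongr
  ·
    have hν1' : ν < 1 := lt_of_le_of_ne hν1 hν
    simp only [caputoD, if_neg hν, fdiff]
    set C : ℝ := h / Real.Gamma (1 - ν) with hCdef
    have hC : 0 < C := div_pos hh (Real.Gamma_pos_of_pos (by linarith))
    set X : ℕ → Fin n → ℝ := fun j => y (a + (j : ℝ) * h) with hXdef
    set c : ℕ → ℝ := fun j => hfact h (((k : ℝ) - j - ν) * h) (-ν) with hcdef
    set V : ℕ → ℝ := fun j => (X (k+1) - X j) ⬝ᵥ P *ᵥ (X (k+1) - X j) with hVdef
    have hXs : ∀ j : ℕ, y (a + (j : ℝ) * h + h) = X (j+1) := by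
      intro j
      show _ = y (a + ((j+1 : ℕ) : ℝ) * h)
      congr 1; push_cast; ring
    have hu : y (a + ((k : ℝ) + 1) * h) = X (k+1) := by
      show _ = y (a + ((k+1 : ℕ) : ℝ) * h)
      congr 1; push_cast; ring
    have hargj : ∀ j : ℕ,
        a + (1-ν)*h + (k:ℝ)*h - (a + (j:ℝ)*h + h) = ((k:ℝ) - j - ν) * h := fun j => by ring
    have hL : ∑ j ∈ Finset.range (k+1),
        hfact h (a + (1-ν)*h + (k:ℝ)*h - (a + (j:ℝ)*h + h)) (-ν) *
          ((y (a + (j:ℝ)*h + h) ⬝ᵥ P *ᵥ y (a + (j:ℝ)*h + h)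
            - y (a + (j:ℝ)*h) ⬝ᵥ P *ᵥ y (a + (j:ℝ)*h)) / h)
        = ∑ j ∈ Finset.range (k+1),
            c j * ((X (j+1) ⬝ᵥ P *ᵥ X (j+1) - X j ⬝ᵥ P *ᵥ X j) / h) := by
      refine Finset.sum_congr rfl fun j _ => ?_
      rw [hargj j, hXs j]
    have hR : (fun i => C * ∑ j ∈ Finset.range (k+1),
        hfact h (a + (1-ν)*h + (k:ℝ)*h - (a + (j:ℝ)*h + h)) (-ν) *
          ((y (a + (j:ℝ)*h + h) i - y (a + (j:ℝ)*h) i) / h))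
        = fun i => C * ∑ j ∈ Finset.range (k+1), (c j / h) * ((X (j+1) - X j) i) := by
      funext i
      congr 1
      refine Finset.sum_congr rfl fun j _ => ?_
      rw [hargj j, hXs j]
      simp only [Pi.sub_apply]
      ring
    rw [hL, hR, hu]
    have e : (fun i => C * ∑ j ∈ Finset.range (k+1), (c j / h) * ((X (j+1) - X j) i))
        = C • (fun i => ∑ j ∈ Finset.range (k+1), (c j / h) * ((X (j+1) - X j) i)) := rfl
    rw [e, mulVec_smul, dotProduct_smul, smul_eq_mul, dot_sum]
    -- coefficient facts
    have hcpos : ∀ j : ℕ, j ≤ k → 0 < c j := by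
      intro j hj
      have hjk : (j : ℝ) ≤ (k : ℝ) := by exact_mod_cast hj
      have := hfact_pos h ν hh hν0 hν1' ((k:ℝ) - j) (by linarith)
      simpa [hcdef] using this
    have hcmono : ∀ j : ℕ, j < k → c j ≤ c (j+1) := by
      intro j hj
      have hjk : (j : ℝ) + 1 ≤ (k : ℝ) := by exact_mod_cast hj
      have := hfact_mono h ν hh hν0 hν1' ((k:ℝ) - (j+1)) (by linarith)
      have e1 : ((k:ℝ) - (j+1) + 1 - ν) * h = ((k:ℝ) - j - ν) * h := by ring
      have e2 : ((k:ℝ) - (j+1) - ν) * h = ((k:ℝ) - ((j+1:ℕ):ℝ) - ν) * h := by push_cast; ring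
      rw [e1, e2] at this
      simpa [hcdef] using this
    -- per-term identity
    have hterm : ∀ j ∈ Finset.range (k+1),
        (c j / h) * (X (k+1) ⬝ᵥ P *ᵥ (X (j+1) - X j))
          - (1/2) * (c j * ((X (j+1) ⬝ᵥ P *ᵥ X (j+1) - X j ⬝ᵥ P *ᵥ X j) / h))
        = (c j / (2*h)) * (V j - V (j+1)) := by
      intro j _
      have hq := quad_id P hPsym (X (k+1)) (X j) (X (j+1))
      rw [mulVec_sub, dotProduct_sub]
      have hVj : V j = (X (k+1) - X j) ⬝ᵥ P *ᵥ (X (k+1) - X j) := rfl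
      have hVj1 : V (j+1) = (X (k+1) - X (j+1)) ⬝ᵥ P *ᵥ (X (k+1) - X (j+1)) := rfl
      rw [hVj, hVj1]
      linear_combination (c j / h) * hq
    have hVnn : ∀ j, 0 ≤ V j := fun j => psd_nn P hP _
    have hVk1 : V (k+1) = 0 := by
      show (X (k+1) - X (k+1)) ⬝ᵥ P *ᵥ (X (k+1) - X (k+1)) = 0
      rw [sub_self]
      simp
    have habel := abel_id (fun j => c j / (2*h)) V k
    rw [hVk1, mul_zero, add_zero] at habel
    have hnn : 0 ≤ ∑ j ∈ Finset.range (k+1), (c j/(2*h)) * (V j - V (j+1)) := by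
      rw [habel]
      have t1 : 0 ≤ c 0 / (2*h) * V 0 :=
        mul_nonneg (div_nonneg (hcpos 0 (Nat.zero_le k)).le (by linarith)) (hVnn 0)
      have t2 : 0 ≤ ∑ j ∈ Finset.range k, (c (j+1)/(2*h) - c j/(2*h)) * V (j+1) := by
        refine Finset.sum_nonneg fun j hj => mul_nonneg ?_ (hVnn _)
        have hm := hcmono j (Finset.mem_range.1 hj)
        rw [sub_nonneg]
        gcongr
      linarith
    have hsum : ∑ j ∈ Finset.range (k+1), (c j/(2*h)) * (V j - V (j+1))
        = (∑ j ∈ Finset.range (k+1), (c j/h) * (X (k+1) ⬝ᵥ P *ᵥ (X (j+1) - X j)))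
          - (1/2) * ∑ j ∈ Finset.range (k+1),
              c j * ((X (j+1) ⬝ᵥ P *ᵥ X (j+1) - X j ⬝ᵥ P *ᵥ X j) / h) := by
      rw [Finset.mul_sum, ← Finset.sum_sub_distrib]
      exact Finset.sum_congr rfl fun j hj => (hterm j hj).symm
    rw [hsum] at hnn
    nlinarith [mul_nonneg hC.le hnn]
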